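/- Let 𝓰, 𝓱 : [1,∞) → [0,∞) be nonincreasing right-continuous functions tending to 0 at infinity, and let q > 1 and a > 1. Assume that for all t ≥ 1 one has −∫_t^∞ s^{q−1} d𝓰(s) ≤ a t^{q−1} 𝓰(t) − a ∫_t^∞ s^{q−1} d𝓱(s) (Stieltjes integrals). Then for all p ∈ [q, q + (q−1)/(a−1)) with a(p−q) < p−1, −∫_1^∞ t^{p−1} d𝓰(t) ≤ ((p−1)−(p−q))/((p−1)−a(p−q)) · (−∫_1^∞ t^{q−1} d𝓰(t)) + (2a(p−1))/((p−1)−a(p−q)) · (−∫_1^∞ t^{p−1} d𝓱(t)). -/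

import Mathlib

open MeasureTheory Set Filter
open scoped ENNReal NNReal

-- tail measure
lemma aux_tail (μ : Measure ℝ) (F : ℝ → ℝ)
    (hμ : ∀ s t : ℝ, 1 ≤ s → s ≤ t → μ (Ioc s t) = ENNReal.ofReal (F s - F t))
    (hlim : Tendsto F atTop (nhds 0)) (s : ℝ) (hs : 1 ≤ s) :
    μ (Ioi s) = ENNReal.ofReal (F s) := by
  have hU : (⋃ n : ℕ, Ioc s (s + n)) = Ioi s := by
    ext x
    simp only [mem_iUnion, mem_Ioc, mem_Ioi]
    constructor
    · rintro ⟨n, h1, _⟩; exact h1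
    · intro hx
      obtain ⟨n, hn⟩ := exists_nat_ge (x - s)
      exact ⟨n, hx, by linarith⟩
  have hmono : Monotone fun n : ℕ => Ioc s (s + n) := by
    intro m n hmn
    apply Ioc_subset_Ioc_right
    have : (m : ℝ) ≤ n := Nat.cast_le.2 hmn
    linarith
  have h1 := tendsto_measure_iUnion_atTop (μ := μ) hmono
  rw [hU] at h1
  have h2 : Tendsto (⇑μ ∘ fun n : ℕ => Ioc s (s + n)) atTop (nhds (ENNReal.ofReal (F s))) := by
    have : (⇑μ ∘ fun n : ℕ => Ioc s (s + n)) = fun n : ℕ => ENNReal.ofReal (F s - F (s + n)) := by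
      funext n
      exact hμ s (s + n) hs (le_add_of_nonneg_right (Nat.cast_nonneg n))
    rw [this]
    have hF : Tendsto (fun n : ℕ => F (s + n)) atTop (nhds 0) := by
      apply hlim.comp
      apply tendsto_atTop_add_const_left
      exact tendsto_natCast_atTop_atTop
    have : Tendsto (fun n : ℕ => F s - F (s + n)) atTop (nhds (F s - 0)) :=
      tendsto_const_nhds.sub hF
    rw [sub_zero] at this
    exact (ENNReal.continuous_ofReal.tendsto _).comp this
  exact tendsto_nhds_unique h1 h2

lemma aux_sigma (μ : Measure ℝ) (F : ℝ → ℝ)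
    (hμ : ∀ s t : ℝ, 1 ≤ s → s ≤ t → μ (Ioc s t) = ENNReal.ofReal (F s - F t)) :
    SigmaFinite (μ.restrict (Ioi 1)) := by
  refine ⟨⟨⟨fun n => Ioc (1:ℝ) (1 + n) ∪ (Ioi 1)ᶜ, fun _ => trivial, ?_, ?_⟩⟩⟩
  · intro n
    have hm : MeasurableSet (Ioc (1:ℝ) (1 + n) ∪ (Ioi 1)ᶜ) :=
      measurableSet_Ioc.union measurableSet_Ioi.compl
    rw [Measure.restrict_apply hm]
    have : (Ioc (1:ℝ) (1 + n) ∪ (Ioi 1)ᶜ) ∩ Ioi 1 = Ioc (1:ℝ) (1 + n) := by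
      ext x
      simp only [mem_inter_iff, mem_union, mem_Ioc, mem_compl_iff, mem_Ioi]
      constructor
      · rintro ⟨h1 | h1, h2⟩
        · exact h1
        · exact absurd h2 h1
      · intro h; exact ⟨Or.inl h, h.1⟩
    rw [this, hμ 1 (1 + n) le_rfl (le_add_of_nonneg_right (Nat.cast_nonneg n))]
    exact ENNReal.ofReal_lt_top
  · apply eq_univ_of_forall
    intro x
    obtain ⟨n, hn⟩ := exists_nat_ge (x - 1)
    by_cases hx : 1 < x
    · exact mem_iUnion.2 ⟨n, Or.inl ⟨hx, by linarith⟩⟩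
    · exact mem_iUnion.2 ⟨0, Or.inr (by simpa using hx)⟩

lemma aux_pow (b t : ℝ) (hb : 0 < b) (ht : 1 ≤ t) :
    ENNReal.ofReal (t ^ b - 1) = ∫⁻ s in Ioo 1 t, ENNReal.ofReal (b * s ^ (b - 1)) := by
  have hcont : ContinuousOn (fun s : ℝ => b * s ^ (b - 1)) (Icc 1 t) := by
    apply ContinuousOn.mul continuousOn_const
    exact ContinuousOn.rpow_const continuousOn_id fun x hx => Or.inl (by
      have := hx.1; intro h; rw [h] at this; linarith)
  have hint : IntegrableOn (fun s : ℝ => b * s ^ (b - 1)) (Ioo 1 t) :=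
    (hcont.integrableOn_Icc).mono_set Ioo_subset_Icc_self
  have hnn : 0 ≤ᶠ[ae (volume.restrict (Ioo 1 t))] fun s : ℝ => b * s ^ (b - 1) := by
    rw [EventuallyLE, ae_restrict_iff' measurableSet_Ioo]
    exact ae_of_all _ fun s hs => by
      exact mul_nonneg hb.le (Real.rpow_nonneg (by linarith [hs.1]) _)
  rw [← ofReal_integral_eq_lintegral_ofReal hint hnn]
  congr 1
  have h1 : ∫ s in Ioo 1 t, b * s ^ (b - 1) = ∫ s in (1:ℝ)..t, b * s ^ (b - 1) := by
    rw [intervalIntegral.integral_of_le ht, integral_Ioc_eq_integral_Ioo]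
  rw [h1, intervalIntegral.integral_const_mul, integral_rpow (Or.inl (by linarith))]
  rw [sub_add_cancel, Real.one_rpow]
  field_simp

lemma aux_fub (μ : Measure ℝ) (hsf : SigmaFinite (μ.restrict (Ioi (1:ℝ)))) (b c : ℝ)
    (hb : 0 < b) :
    ∫⁻ t in Ioi 1, ENNReal.ofReal (t ^ c) * ENNReal.ofReal (t ^ b - 1) ∂μ
      = ∫⁻ s in Ioi 1, ENNReal.ofReal (b * s ^ (b - 1)) *
          ∫⁻ t in Ioi s, ENNReal.ofReal (t ^ c) ∂μ := by
  haveI := hsf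
  set g : ℝ × ℝ → ℝ≥0∞ :=
    fun x => ENNReal.ofReal (b * x.2 ^ (b - 1)) * ENNReal.ofReal (x.1 ^ c) with hg
  set S : Set (ℝ × ℝ) := {x : ℝ × ℝ | x.2 < x.1} with hS
  have hSm : MeasurableSet S := measurableSet_lt measurable_snd measurable_fst
  have hgm : Measurable g := by
    refine Measurable.mul (f := fun x : ℝ × ℝ => ENNReal.ofReal (b * x.2 ^ (b - 1))) (g := fun x : ℝ × ℝ => ENNReal.ofReal (x.1 ^ c)) ?_ ?_
    · exact ((measurable_snd.pow_const _).const_mul b).ennreal_ofReal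
    · exact (measurable_fst.pow_const _).ennreal_ofReal
  set f : ℝ → ℝ → ℝ≥0∞ := fun t s => S.indicator g (t, s) with hf
  have hfm : Measurable (Function.uncurry f) := by
    have : Function.uncurry f = S.indicator g := rfl
    rw [this]
    exact hgm.indicator hSm
  have step1 : ∫⁻ t in Ioi 1, ENNReal.ofReal (t ^ c) * ENNReal.ofReal (t ^ b - 1) ∂μ
      = ∫⁻ t, ∫⁻ s, f t s ∂(volume.restrict (Ioi 1)) ∂(μ.restrict (Ioi 1)) := by
    apply setLIntegral_congr_fun measurableSet_Ioi
    intro t ht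
    beta_reduce
    have h1 : (f t ·) = (Iio t).indicator
        (fun s => ENNReal.ofReal (b * s ^ (b - 1)) * ENNReal.ofReal (t ^ c)) := by
      funext s
      simp only [hf, hS, hg, indicator, mem_setOf_eq, mem_Iio]
    rw [h1, lintegral_indicator measurableSet_Iio,
      Measure.restrict_restrict measurableSet_Iio, inter_comm, Ioi_inter_Iio,
      lintegral_mul_const' _ _ ENNReal.ofReal_ne_top,
      ← aux_pow b t hb (le_of_lt ht), mul_comm]
  have step3 : ∫⁻ s, ∫⁻ t, f t s ∂(μ.restrict (Ioi 1)) ∂(volume.restrict (Ioi 1))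
      = ∫⁻ s in Ioi 1, ENNReal.ofReal (b * s ^ (b - 1)) *
          ∫⁻ t in Ioi s, ENNReal.ofReal (t ^ c) ∂μ := by
    apply setLIntegral_congr_fun measurableSet_Ioi
    intro s hs
    beta_reduce
    have h1 : (f · s) = (Ioi s).indicator
        (fun t => ENNReal.ofReal (b * s ^ (b - 1)) * ENNReal.ofReal (t ^ c)) := by
      funext t
      simp only [hf, hS, hg, indicator, mem_setOf_eq, mem_Ioi]
    rw [h1, lintegral_indicator measurableSet_Ioi,
      Measure.restrict_restrict measurableSet_Ioi,
      inter_eq_self_of_subset_left (Ioi_subset_Ioi (le_of_lt hs)),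
      lintegral_const_mul' _ _ ENNReal.ofReal_ne_top]
  rw [step1, lintegral_lintegral_swap hfm.aemeasurable, step3]

lemma aux_split (μ : Measure ℝ) (hsf : SigmaFinite (μ.restrict (Ioi (1:ℝ))))
    (q p : ℝ) (hpq : q < p) :
    ∫⁻ t in Ioi 1, ENNReal.ofReal (t ^ (p - 1)) ∂μ
      = (∫⁻ t in Ioi 1, ENNReal.ofReal (t ^ (q - 1)) ∂μ)
        + ∫⁻ s in Ioi 1, ENNReal.ofReal ((p - q) * s ^ (p - q - 1)) *
            ∫⁻ t in Ioi s, ENNReal.ofReal (t ^ (q - 1)) ∂μ := by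
  have hb : 0 < p - q := by linarith
  rw [← aux_fub μ hsf (p - q) (q - 1) hb]
  have key : ∀ t : ℝ, t ∈ Ioi (1:ℝ) → ENNReal.ofReal (t ^ (p - 1))
      = ENNReal.ofReal (t ^ (q - 1)) +
        ENNReal.ofReal (t ^ (q - 1)) * ENNReal.ofReal (t ^ (p - q) - 1) := by
    intro t ht
    have ht0 : (0:ℝ) < t := lt_trans one_pos ht
    have ht1 : (1:ℝ) ≤ t ^ (p - q) := Real.one_le_rpow (le_of_lt ht) hb.le
    have h2 : ENNReal.ofReal (t ^ (q - 1)) * ENNReal.ofReal (t ^ (p - q) - 1)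
        = ENNReal.ofReal (t ^ (q - 1) * (t ^ (p - q) - 1)) :=
      (ENNReal.ofReal_mul (Real.rpow_nonneg ht0.le _)).symm
    rw [h2, ← ENNReal.ofReal_add (Real.rpow_nonneg ht0.le _)
      (mul_nonneg (Real.rpow_nonneg ht0.le _) (by linarith))]
    congr 1
    have : t ^ (q - 1) * t ^ (p - q) = t ^ (p - 1) := by
      rw [← Real.rpow_add ht0]; ring_nf
    nlinarith [this]
  rw [setLIntegral_congr_fun measurableSet_Ioi key]
  rw [lintegral_add_left ((measurable_id'.pow_const _).ennreal_ofReal)]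

theorem stmt6 (G H : ℝ → ℝ) (q a : ℝ) (hq : 1 < q) (ha : 1 < a)
    (hGpos : ∀ t, 1 ≤ t → 0 ≤ G t) (hHpos : ∀ t, 1 ≤ t → 0 ≤ H t)
    (hGanti : AntitoneOn G (Ici 1)) (hHanti : AntitoneOn H (Ici 1))
    (hGrc : ∀ t, 1 ≤ t → ContinuousWithinAt G (Ici t) t)
    (hHrc : ∀ t, 1 ≤ t → ContinuousWithinAt H (Ici t) t)
    (hGlim : Tendsto G atTop (nhds 0)) (hHlim : Tendsto H atTop (nhds 0))
    -- `μG` and `μH` are the Lebesgue–Stieltjes measures of `-G` and `-H`,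
    -- so that `∫ f ∂μG = -∫ f dG` as a Stieltjes integral.
    (μG μH : Measure ℝ)
    (hμG : ∀ s t : ℝ, 1 ≤ s → s ≤ t → μG (Ioc s t) = ENNReal.ofReal (G s - G t))
    (hμH : ∀ s t : ℝ, 1 ≤ s → s ≤ t → μH (Ioc s t) = ENNReal.ofReal (H s - H t))
    -- the reverse Hölder inequality on level sets
    (hmain : ∀ t : ℝ, 1 ≤ t →
      ∫⁻ s in Ioi t, ENNReal.ofReal (s ^ (q - 1)) ∂μG ≤
        ENNReal.ofReal (a * t ^ (q - 1) * G t) +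
          ENNReal.ofReal a * ∫⁻ s in Ioi t, ENNReal.ofReal (s ^ (q - 1)) ∂μH)
    (p : ℝ) (hpq : q ≤ p) (hpa : a * (p - q) < p - 1)
    (hGfin : ∫⁻ t in Ioi 1, ENNReal.ofReal (t ^ (p - 1)) ∂μG ≠ ⊤)
    (hHfin : ∫⁻ t in Ioi 1, ENNReal.ofReal (t ^ (p - 1)) ∂μH ≠ ⊤) :
    ∫⁻ t in Ioi 1, ENNReal.ofReal (t ^ (p - 1)) ∂μG ≤
      ENNReal.ofReal (((p - 1) - (p - q)) / ((p - 1) - a * (p - q))) *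
          ∫⁻ t in Ioi 1, ENNReal.ofReal (t ^ (q - 1)) ∂μG +
        ENNReal.ofReal (2 * a * (p - 1) / ((p - 1) - a * (p - q))) *
          ∫⁻ t in Ioi 1, ENNReal.ofReal (t ^ (p - 1)) ∂μH := by
  rcases eq_or_lt_of_le hpq with rfl | hpq'
  · have e1 : ((q-1) - (q-q)) / ((q-1) - a*(q-q)) = 1 := by
      rw [sub_self, mul_zero, sub_zero]
      exact div_self (by linarith)
    rw [show (q:ℝ) - 1 - (q - q) = (q-1) - (q-q) from rfl] at e1
    rw [e1, ENNReal.ofReal_one, one_mul]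
    exact le_self_add
  · have hq1 : (0:ℝ) < q - 1 := by linarith
    have hb : (0:ℝ) < p - q := by linarith
    have hp1 : (0:ℝ) < p - 1 := by linarith
    have ha0 : (0:ℝ) ≤ a := by linarith
    have hD : (0:ℝ) < (p-1) - a*(p-q) := by linarith
    have hapq : (0:ℝ) ≤ a*(p-q) := mul_nonneg ha0 hb.le
    have hap1 : (0:ℝ) ≤ a*(p-1) := mul_nonneg ha0 hp1.le
    have hsfG : SigmaFinite (μG.restrict (Ioi 1)) := aux_sigma μG G hμG
    have hsfH : SigmaFinite (μH.restrict (Ioi 1)) := aux_sigma μH H hμH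
    have tailG : ∀ s : ℝ, 1 ≤ s → μG (Ioi s) = ENNReal.ofReal (G s) :=
      aux_tail μG G hμG hGlim
    set X := ∫⁻ t in Ioi 1, ENNReal.ofReal (t ^ (p - 1)) ∂μG with hXd
    set Y := ∫⁻ t in Ioi 1, ENNReal.ofReal (t ^ (q - 1)) ∂μG with hYd
    set Z := ∫⁻ t in Ioi 1, ENNReal.ofReal (t ^ (p - 1)) ∂μH with hZd
    set W := ∫⁻ t in Ioi 1, ENNReal.ofReal (t ^ (q - 1)) ∂μH with hWd
    set KG := ∫⁻ s in Ioi 1, ENNReal.ofReal ((p - q) * s ^ (p - q - 1)) *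
        ∫⁻ t in Ioi s, ENNReal.ofReal (t ^ (q - 1)) ∂μG with hKGd
    set KH := ∫⁻ s in Ioi 1, ENNReal.ofReal ((p - q) * s ^ (p - q - 1)) *
        ∫⁻ t in Ioi s, ENNReal.ofReal (t ^ (q - 1)) ∂μH with hKHd
    set J := ∫⁻ s in Ioi 1, ENNReal.ofReal (s ^ (p - 1 - 1)) * ENNReal.ofReal (G s) with hJd
    have h1 : X = Y + KG := aux_split μG hsfG q p hpq'
    have h2 : Z = W + KH := aux_split μH hsfH q p hpq'
    have einner : ∀ s : ℝ, 1 ≤ s →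
        (∫⁻ t in Ioi s, ENNReal.ofReal (t ^ ((1:ℝ) - 1)) ∂μG) = ENNReal.ofReal (G s) := by
      intro s hs
      have e : ∀ t : ℝ, t ∈ Ioi s → ENNReal.ofReal (t ^ ((1:ℝ) - 1)) = 1 := by
        intro t ht
        rw [show (1:ℝ) - 1 = 0 from by norm_num, Real.rpow_zero, ENNReal.ofReal_one]
      rw [setLIntegral_congr_fun measurableSet_Ioi e, lintegral_one,
        Measure.restrict_apply_univ, tailG s hs]
    have h3 : X = ENNReal.ofReal (G 1) + ENNReal.ofReal (p - 1) * J := by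
      have h0 := aux_split μG hsfG 1 p (by linarith)
      rw [hXd, h0]
      congr 1
      · exact einner 1 le_rfl
      · have e2 : ∀ s : ℝ, s ∈ Ioi (1:ℝ) →
            ENNReal.ofReal ((p-1) * s ^ (p-1-1)) *
              (∫⁻ t in Ioi s, ENNReal.ofReal (t ^ ((1:ℝ) - 1)) ∂μG)
            = ENNReal.ofReal (p-1) * (ENNReal.ofReal (s ^ (p-1-1)) * ENNReal.ofReal (G s)) := by
          intro s hs
          rw [einner s (le_of_lt hs), ENNReal.ofReal_mul hp1.le, mul_assoc]
        rw [setLIntegral_congr_fun measurableSet_Ioi e2,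
          lintegral_const_mul' _ _ ENNReal.ofReal_ne_top]
    have hHmeas : Measurable fun s : ℝ => ∫⁻ t in Ioi s, ENNReal.ofReal (t ^ (q-1)) ∂μH := by
      apply Antitone.measurable
      intro s s' hss'
      exact lintegral_mono_set (Ioi_subset_Ioi hss')
    have h4 : KG ≤ ENNReal.ofReal (a*(p-q)) * J + ENNReal.ofReal a * KH := by
      have step : KG ≤ ∫⁻ s in Ioi 1,
          (ENNReal.ofReal (a*(p-q)) * (ENNReal.ofReal (s ^ (p-1-1)) * ENNReal.ofReal (G s))
            + ENNReal.ofReal a * (ENNReal.ofReal ((p-q) * s ^ (p-q-1)) *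
                ∫⁻ t in Ioi s, ENNReal.ofReal (t ^ (q-1)) ∂μH)) := by
        rw [hKGd]
        apply setLIntegral_mono' measurableSet_Ioi
        intro s hs
        have hs1 : (1:ℝ) ≤ s := le_of_lt hs
        have hs0 : (0:ℝ) < s := lt_of_lt_of_le one_pos hs1
        have hco : (0:ℝ) ≤ (p-q) * s ^ (p-q-1) := mul_nonneg hb.le (Real.rpow_nonneg hs0.le _)
        calc ENNReal.ofReal ((p-q) * s^(p-q-1)) * ∫⁻ t in Ioi s, ENNReal.ofReal (t^(q-1)) ∂μG
            ≤ ENNReal.ofReal ((p-q) * s^(p-q-1)) *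
              (ENNReal.ofReal (a * s^(q-1) * G s) +
                ENNReal.ofReal a * ∫⁻ t in Ioi s, ENNReal.ofReal (t^(q-1)) ∂μH) :=
            mul_le_mul_right (hmain s hs1) _
          _ = _ := by
            rw [mul_add]
            congr 1
            · rw [← ENNReal.ofReal_mul hco]
              have hsum : s^(p-q-1) * s^(q-1) = s^(p-1-1) := by
                rw [← Real.rpow_add hs0]; ring_nf
              rw [show (p-q) * s^(p-q-1) * (a * s^(q-1) * G s)
                  = a*(p-q) * (s^(p-1-1) * G s) from by
                linear_combination a * (p - q) * G s * hsum]
              rw [ENNReal.ofReal_mul hapq, ENNReal.ofReal_mul (Real.rpow_nonneg hs0.le _)]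
            · rw [mul_left_comm]
      refine le_trans step (le_of_eq ?_)
      rw [lintegral_add_right (g := fun s => ENNReal.ofReal a * (ENNReal.ofReal ((p-q) * s^(p-q-1)) *
          ∫⁻ t in Ioi s, ENNReal.ofReal (t^(q-1)) ∂μH)) _
        (((((measurable_id'.pow_const _).const_mul _).ennreal_ofReal).mul hHmeas).const_mul _),
        lintegral_const_mul' _ _ ENNReal.ofReal_ne_top,
        lintegral_const_mul' _ _ ENNReal.ofReal_ne_top]
    have h5 : Y ≤ ENNReal.ofReal a * ENNReal.ofReal (G 1) + ENNReal.ofReal a * W := by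
      have h0 := hmain 1 le_rfl
      rw [Real.one_rpow, mul_one] at h0
      refine le_trans h0 (le_of_eq ?_)
      rw [ENNReal.ofReal_mul ha0]
    have B1 : ENNReal.ofReal (p-q) * Y ≤
        ENNReal.ofReal (a*(p-q)) * ENNReal.ofReal (G 1) + ENNReal.ofReal (a*(p-q)) * W := by
      calc ENNReal.ofReal (p-q) * Y
          ≤ ENNReal.ofReal (p-q) * (ENNReal.ofReal a * ENNReal.ofReal (G 1)
              + ENNReal.ofReal a * W) := mul_le_mul_right h5 _
        _ = _ := by
          rw [mul_add, ← mul_assoc, ← mul_assoc, ← ENNReal.ofReal_mul hb.le,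
            mul_comm (p-q) a]
    have B2 : ENNReal.ofReal (p-1) * KG ≤
        ENNReal.ofReal (a*(p-q)) * (ENNReal.ofReal (p-1) * J) + ENNReal.ofReal (a*(p-1)) * KH := by
      calc ENNReal.ofReal (p-1) * KG
          ≤ ENNReal.ofReal (p-1) * (ENNReal.ofReal (a*(p-q)) * J + ENNReal.ofReal a * KH) :=
            mul_le_mul_right h4 _
        _ = _ := by
          rw [mul_add]
          congr 1
          · ring
          · rw [← mul_assoc, ← ENNReal.ofReal_mul hp1.le, mul_comm (p-1) a]
    have B3 : ENNReal.ofReal (a*(p-q)) * W + ENNReal.ofReal (a*(p-1)) * KH ≤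
        ENNReal.ofReal (a*(p-1)) * Z := by
      calc ENNReal.ofReal (a*(p-q)) * W + ENNReal.ofReal (a*(p-1)) * KH
          ≤ ENNReal.ofReal (a*(p-1)) * W + ENNReal.ofReal (a*(p-1)) * KH := by
            apply add_le_add_left
            apply mul_le_mul_left
            apply ENNReal.ofReal_le_ofReal
            nlinarith
        _ = _ := by rw [h2, mul_add]
    have hsplit : ENNReal.ofReal (p-1) = ENNReal.ofReal (q-1) + ENNReal.ofReal (p-q) := by
      rw [← ENNReal.ofReal_add hq1.le hb.le]
      congr 1
      ring
    have key : ENNReal.ofReal (p-1) * X ≤ ENNReal.ofReal (q-1) * Y +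
        (ENNReal.ofReal (a*(p-q)) * X + ENNReal.ofReal (a*(p-1)) * Z) := by
      calc ENNReal.ofReal (p-1) * X
          = ENNReal.ofReal (q-1) * Y + (ENNReal.ofReal (p-q) * Y + ENNReal.ofReal (p-1) * KG) := by
            rw [h1, hsplit]; ring
        _ ≤ ENNReal.ofReal (q-1) * Y +
            ((ENNReal.ofReal (a*(p-q)) * ENNReal.ofReal (G 1) + ENNReal.ofReal (a*(p-q)) * W)
              + (ENNReal.ofReal (a*(p-q)) * (ENNReal.ofReal (p-1) * J)
                  + ENNReal.ofReal (a*(p-1)) * KH)) :=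
            add_le_add le_rfl (add_le_add B1 B2)
        _ = ENNReal.ofReal (q-1) * Y +
            (ENNReal.ofReal (a*(p-q)) * (ENNReal.ofReal (G 1) + ENNReal.ofReal (p-1) * J)
              + (ENNReal.ofReal (a*(p-q)) * W + ENNReal.ofReal (a*(p-1)) * KH)) := by ring
        _ = ENNReal.ofReal (q-1) * Y +
            (ENNReal.ofReal (a*(p-q)) * X
              + (ENNReal.ofReal (a*(p-q)) * W + ENNReal.ofReal (a*(p-1)) * KH)) := by rw [h3]
        _ ≤ _ := add_le_add le_rfl (add_le_add le_rfl B3)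
    have hfinX : ENNReal.ofReal (a*(p-q)) * X ≠ ⊤ :=
      ENNReal.mul_ne_top ENNReal.ofReal_ne_top hGfin
    have key2 : ENNReal.ofReal ((p-1) - a*(p-q)) * X ≤
        ENNReal.ofReal (q-1) * Y + ENNReal.ofReal (a*(p-1)) * Z := by
      rw [← ENNReal.add_le_add_iff_right hfinX]
      calc ENNReal.ofReal ((p-1) - a*(p-q)) * X + ENNReal.ofReal (a*(p-q)) * X
          = ENNReal.ofReal (p-1) * X := by
            rw [← add_mul, ← ENNReal.ofReal_add hD.le hapq,
              show (p-1) - a*(p-q) + a*(p-q) = p-1 from by ring]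
        _ ≤ ENNReal.ofReal (q-1) * Y +
            (ENNReal.ofReal (a*(p-q)) * X + ENNReal.ofReal (a*(p-1)) * Z) := key
        _ = ENNReal.ofReal (q-1) * Y + ENNReal.ofReal (a*(p-1)) * Z
            + ENNReal.ofReal (a*(p-q)) * X := by ring
    have hDinv : ENNReal.ofReal (1/((p-1) - a*(p-q))) * ENNReal.ofReal ((p-1) - a*(p-q)) = 1 := by
      rw [← ENNReal.ofReal_mul (by positivity), one_div_mul_cancel hD.ne', ENNReal.ofReal_one]
    calc X = 1 * X := (one_mul X).symm
      _ = ENNReal.ofReal (1/((p-1) - a*(p-q))) * (ENNReal.ofReal ((p-1) - a*(p-q)) * X) := by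
          rw [← mul_assoc, hDinv]
      _ ≤ ENNReal.ofReal (1/((p-1) - a*(p-q))) *
          (ENNReal.ofReal (q-1) * Y + ENNReal.ofReal (a*(p-1)) * Z) := mul_le_mul_right key2 _
      _ = ENNReal.ofReal ((q-1)/((p-1) - a*(p-q))) * Y
          + ENNReal.ofReal ((a*(p-1))/((p-1) - a*(p-q))) * Z := by
          rw [mul_add, ← mul_assoc, ← mul_assoc,
            ← ENNReal.ofReal_mul (by positivity), ← ENNReal.ofReal_mul (by positivity),
            show 1/((p-1) - a*(p-q)) * (q-1) = (q-1)/((p-1) - a*(p-q)) from by ring,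
            show 1/((p-1) - a*(p-q)) * (a*(p-1)) = (a*(p-1))/((p-1) - a*(p-q)) from by ring]
      _ ≤ _ := by
          apply add_le_add
          · apply le_of_eq
            congr 2
            ring
          · apply mul_le_mul_left
            apply ENNReal.ofReal_le_ofReal
            apply div_le_div_of_nonneg_right ?_ hD.le
            nlinarith
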